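/- Let b̃, C̃ ∈ ℝ, let I ⊆ ℝ be a nonempty open interval, and let f : I → ℝ be twice differentiable with f''(u) ≠ 0 for all u ∈ I, satisfying √(1+f'(u)²)·((1+f'(u)²)/f''(u) − b̃) = C̃ for all u ∈ I. Then there exists a constant C̃₁ ∈ ℝ such that for all u ∈ I, f(u) = C̃₁ − C̃·(1+f'(u)²)^{−1/2} + (b̃/2)·log(1+f'(u)²). -/

import Mathlib

open Real Set

/-- Lemma 3.1 (first-integral form), case ã = 0. -/
theorem stmt_1 (btil Ctil : ℝ)
    (a b : ℝ) (hab : a < b) (f : ℝ → ℝ)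
    (hf1 : ∀ u ∈ Ioo a b, DifferentiableAt ℝ f u)
    (hf2 : ∀ u ∈ Ioo a b, DifferentiableAt ℝ (deriv f) u)
    (hf'' : ∀ u ∈ Ioo a b, deriv (deriv f) u ≠ 0)
    (heq : ∀ u ∈ Ioo a b,
      Real.sqrt (1 + (deriv f u) ^ 2) *
        ((1 + (deriv f u) ^ 2) / deriv (deriv f) u - btil) = Ctil) :
    ∃ C₁ : ℝ, ∀ u ∈ Ioo a b,
      f u = C₁ - Ctil * (1 + (deriv f u) ^ 2) ^ (-(1 : ℝ) / 2)
        + (btil / 2) * Real.log (1 + (deriv f u) ^ 2) := by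
  set g : ℝ → ℝ := fun u =>
    f u + Ctil * (1 + (deriv f u) ^ 2) ^ (-(1 : ℝ) / 2)
      - (btil / 2) * Real.log (1 + (deriv f u) ^ 2) with hg
  have key : ∀ u ∈ Ioo a b, HasDerivAt g 0 u := by
    intro u hu
    set p := deriv f u with hp
    set q := deriv (deriv f) u with hq
    have hs : (0:ℝ) < 1 + p ^ 2 := by positivity
    have hsne : (1 + p ^ 2) ≠ 0 := ne_of_gt hs
    have hqne : q ≠ 0 := hf'' u hu
    have h1 : HasDerivAt f p u := (hf1 u hu).hasDerivAt
    have h2 : HasDerivAt (deriv f) q u := (hf2 u hu).hasDerivAt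
    have h3 : HasDerivAt (fun u => 1 + (deriv f u) ^ 2) (2 * p * q) u := by
      have := (h2.pow 2).const_add 1
      exact this.congr_deriv (by norm_num [hp])
    have h4 : HasDerivAt (fun u => (1 + (deriv f u) ^ 2) ^ (-(1 : ℝ) / 2))
        ((-(1:ℝ)/2) * (1 + p ^ 2) ^ ((-(1:ℝ)/2) - 1) * (2 * p * q)) u := by
      have := h3.rpow_const (p := (-(1:ℝ)/2)) (Or.inl hsne)
      convert this using 1
      ring
    have h5 : HasDerivAt (fun u => Real.log (1 + (deriv f u) ^ 2))
        ((2 * p * q) / (1 + p ^ 2)) u := h3.log hsne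
    have h6 := (h1.add (h4.const_mul Ctil)).sub (h5.const_mul (btil / 2))
    have hC := heq u hu
    set s : ℝ := 1 + p ^ 2 with hsdef
    set sq : ℝ := Real.sqrt s with hsqdef
    set A : ℝ := s ^ ((-(1:ℝ)/2) - 1) with hAdef
    have hsq : sq = s ^ ((1:ℝ)/2) := Real.sqrt_eq_rpow s
    have hA : A * (s * sq) = 1 := by
      rw [hAdef, hsq]
      nth_rewrite 2 [show s = s ^ (1:ℝ) from (Real.rpow_one s).symm]
      rw [← Real.rpow_add hs, ← Real.rpow_add hs]
      norm_num
    have hsne' : s ≠ 0 := ne_of_gt hs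
    have hderiv0 : p + Ctil * ((-(1:ℝ)/2) * A * (2 * p * q))
        - btil / 2 * ((2 * p * q) / s) = 0 := by
      rw [← hC, ← hq]
      field_simp
      linear_combination (-(p * (s - q * btil))) * hA
    rw [hg]
    exact h6.congr_deriv (by linarith [hderiv0])
  set u₀ := (a + b) / 2 with hu₀
  have hu₀mem : u₀ ∈ Ioo a b := by constructor <;> simp only [hu₀] <;> linarith
  refine ⟨g u₀, fun u hu => ?_⟩
  have hconst : g u = g u₀ := by
    apply (convex_Ioo a b).is_const_of_fderivWithin_eq_zero
      (fun x hx => ((key x hx).differentiableAt).differentiableWithinAt)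
      (fun x hx => ?_) hu hu₀mem
    rw [fderivWithin_of_isOpen isOpen_Ioo hx, ((key x hx).hasFDerivAt).fderiv]
    ext
    simp
  simp only [hg] at hconst ⊢
  linarith [hconst]
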